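/- arXiv:1404.6192 — 2 statements merged into one kernel-verified Lean document; each statement's English description precedes it below -/
import Mathlib

section
/- Let f : ℝ² → ℝ be 2π-periodic in each variable and suppose Σ_{n=2}^∞ v_s#(n,f)·log n / n² < ∞ for s = 1,2. Then f ∈ {n/log n}#BV. -/
open scoped ENNReal BigOperators
open Filter Set

noncomputable section

/-- A collection of `n` pairwise nonoverlapping subintervals of `T = [0, 2π]`,
given as pairs of endpoints. -/
def NonoverlapIcc (n : ℕ) (I : Fin n → ℝ × ℝ) : Prop :=
  (∀ i, 0 ≤ (I i).1 ∧ (I i).1 < (I i).2 ∧ (I i).2 ≤ 2 * Real.pi) ∧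
    ∀ i j, i ≠ j → (I i).2 ≤ (I j).1 ∨ (I j).2 ≤ (I i).1

/-- `f : ℝ² → ℝ` (curried) is `2π`-periodic in each variable. -/
def Periodic2 (f : ℝ → ℝ → ℝ) : Prop :=
  ∀ x y : ℝ, f (x + 2 * Real.pi) y = f x y ∧ f x (y + 2 * Real.pi) = f x y

/-- `ΛV₁(f)`: partial `Λ`-variation in the first variable. -/
def LamV1 (Λ : ℕ → ℝ) (f : ℝ → ℝ → ℝ) : ℝ≥0∞ :=
  ⨆ (y ∈ Icc (0:ℝ) (2 * Real.pi)) (n : ℕ) (I : Fin n → ℝ × ℝ) (_ : NonoverlapIcc n I),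
    ENNReal.ofReal (∑ i, |f (I i).2 y - f (I i).1 y| / Λ ((i : ℕ) + 1))

/-- `ΛV₂(f)`: partial `Λ`-variation in the second variable. -/
def LamV2 (Λ : ℕ → ℝ) (f : ℝ → ℝ → ℝ) : ℝ≥0∞ :=
  ⨆ (x ∈ Icc (0:ℝ) (2 * Real.pi)) (m : ℕ) (J : Fin m → ℝ × ℝ) (_ : NonoverlapIcc m J),
    ENNReal.ofReal (∑ j, |f x (J j).2 - f x (J j).1| / Λ ((j : ℕ) + 1))

/-- `ΛV₁,₂(f)`: mixed `Λ`-variation. -/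
def LamV12 (Λ : ℕ → ℝ) (f : ℝ → ℝ → ℝ) : ℝ≥0∞ :=
  ⨆ (n : ℕ) (m : ℕ) (I : Fin n → ℝ × ℝ) (J : Fin m → ℝ × ℝ)
    (_ : NonoverlapIcc n I) (_ : NonoverlapIcc m J),
    ENNReal.ofReal (∑ i, ∑ j,
      |f (I i).1 (J j).1 - f (I i).1 (J j).2 - f (I i).2 (J j).1 + f (I i).2 (J j).2| /
        (Λ ((i : ℕ) + 1) * Λ ((j : ℕ) + 1)))

/-- Total harmonic variation `HV(f) = HV₁(f) + HV₂(f) + HV₁,₂(f)` (with `λ_n = n`).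
`f ∈ HBV` iff `HarmonicV f ≠ ⊤`. -/
def HarmonicV (f : ℝ → ℝ → ℝ) : ℝ≥0∞ :=
  LamV1 (fun n => (n : ℝ)) f + LamV2 (fun n => (n : ℝ)) f + LamV12 (fun n => (n : ℝ)) f

/-- `Λ#V₁(f)`. -/
def LamSharpV1 (Λ : ℕ → ℝ) (f : ℝ → ℝ → ℝ) : ℝ≥0∞ :=
  ⨆ (n : ℕ) (I : Fin n → ℝ × ℝ) (y : Fin n → ℝ)
    (_ : NonoverlapIcc n I) (_ : ∀ i, y i ∈ Icc (0:ℝ) (2 * Real.pi)),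
    ENNReal.ofReal (∑ i, |f (I i).2 (y i) - f (I i).1 (y i)| / Λ ((i : ℕ) + 1))

/-- `Λ#V₂(f)`. -/
def LamSharpV2 (Λ : ℕ → ℝ) (f : ℝ → ℝ → ℝ) : ℝ≥0∞ :=
  ⨆ (m : ℕ) (J : Fin m → ℝ × ℝ) (x : Fin m → ℝ)
    (_ : NonoverlapIcc m J) (_ : ∀ j, x j ∈ Icc (0:ℝ) (2 * Real.pi)),
    ENNReal.ofReal (∑ j, |f (x j) (J j).2 - f (x j) (J j).1| / Λ ((j : ℕ) + 1))

/-- A collection of `n` pairwise nonoverlapping rectangles `[α,β] × [γ,δ] ⊆ T²`,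
encoded as `((α, β), (γ, δ))`. -/
def NonoverlapRect (n : ℕ) (A : Fin n → (ℝ × ℝ) × (ℝ × ℝ)) : Prop :=
  (∀ k, 0 ≤ (A k).1.1 ∧ (A k).1.1 < (A k).1.2 ∧ (A k).1.2 ≤ 2 * Real.pi ∧
        0 ≤ (A k).2.1 ∧ (A k).2.1 < (A k).2.2 ∧ (A k).2.2 ≤ 2 * Real.pi) ∧
    ∀ k l, k ≠ l →
      Disjoint (Ioo (A k).1.1 (A k).1.2 ×ˢ Ioo (A k).2.1 (A k).2.2)
        (Ioo (A l).1.1 (A l).1.2 ×ˢ Ioo (A l).2.1 (A l).2.2)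

/-- `Λ*V(f)` of Dyachenko–Waterman. -/
def LamStarV (Λ : ℕ → ℝ) (f : ℝ → ℝ → ℝ) : ℝ≥0∞ :=
  ⨆ (n : ℕ) (A : Fin n → (ℝ × ℝ) × (ℝ × ℝ)) (_ : NonoverlapRect n A),
    ENNReal.ofReal (∑ k,
      |f (A k).1.1 (A k).2.1 - f (A k).1.1 (A k).2.2 -
        f (A k).1.2 (A k).2.1 + f (A k).1.2 (A k).2.2| / Λ ((k : ℕ) + 1))

/-- Partial `p`-variation (first variable); with `Φ(u) = u^p`. -/
def PV1pow (p : ℝ) (f : ℝ → ℝ → ℝ) : ℝ≥0∞ :=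
  ⨆ (y ∈ Icc (0:ℝ) (2 * Real.pi)) (n : ℕ) (I : Fin n → ℝ × ℝ) (_ : NonoverlapIcc n I),
    ENNReal.ofReal (∑ i, |f (I i).2 y - f (I i).1 y| ^ p)

/-- Partial `p`-variation (second variable). -/
def PV2pow (p : ℝ) (f : ℝ → ℝ → ℝ) : ℝ≥0∞ :=
  ⨆ (x ∈ Icc (0:ℝ) (2 * Real.pi)) (m : ℕ) (J : Fin m → ℝ × ℝ) (_ : NonoverlapIcc m J),
    ENNReal.ofReal (∑ j, |f x (J j).2 - f x (J j).1| ^ p)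

/-- `V#_{Φ,1}(f)` for the class `B#V_Φ`. -/
def PhiSharpV1 (Φ : ℝ → ℝ) (f : ℝ → ℝ → ℝ) : ℝ≥0∞ :=
  ⨆ (n : ℕ) (I : Fin n → ℝ × ℝ) (y : Fin n → ℝ)
    (_ : NonoverlapIcc n I) (_ : ∀ i, y i ∈ Icc (0:ℝ) (2 * Real.pi)),
    ENNReal.ofReal (∑ i, Φ |f (I i).2 (y i) - f (I i).1 (y i)|)

/-- `V#_{Φ,2}(f)` for the class `B#V_Φ`. -/
def PhiSharpV2 (Φ : ℝ → ℝ) (f : ℝ → ℝ → ℝ) : ℝ≥0∞ :=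
  ⨆ (m : ℕ) (J : Fin m → ℝ × ℝ) (x : Fin m → ℝ)
    (_ : NonoverlapIcc m J) (_ : ∀ j, x j ∈ Icc (0:ℝ) (2 * Real.pi)),
    ENNReal.ofReal (∑ j, Φ |f (x j) (J j).2 - f (x j) (J j).1|)

/-- Partial modulus of variation `v₁(n, f)`. -/
def modV1 (f : ℝ → ℝ → ℝ) (n : ℕ) : ℝ≥0∞ :=
  ⨆ (y ∈ Icc (0:ℝ) (2 * Real.pi)) (I : Fin n → ℝ × ℝ) (_ : NonoverlapIcc n I),
    ENNReal.ofReal (∑ i, |f (I i).2 y - f (I i).1 y|)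

/-- Partial modulus of variation `v₂(m, f)`. -/
def modV2 (f : ℝ → ℝ → ℝ) (m : ℕ) : ℝ≥0∞ :=
  ⨆ (x ∈ Icc (0:ℝ) (2 * Real.pi)) (J : Fin m → ℝ × ℝ) (_ : NonoverlapIcc m J),
    ENNReal.ofReal (∑ j, |f x (J j).2 - f x (J j).1|)

/-- `v₁#(n, f)`. -/
def modSharpV1 (f : ℝ → ℝ → ℝ) (n : ℕ) : ℝ≥0∞ :=
  ⨆ (I : Fin n → ℝ × ℝ) (y : Fin n → ℝ)
    (_ : NonoverlapIcc n I) (_ : ∀ i, y i ∈ Icc (0:ℝ) (2 * Real.pi)),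
    ENNReal.ofReal (∑ i, |f (I i).2 (y i) - f (I i).1 (y i)|)

/-- `v₂#(m, f)`. -/
def modSharpV2 (f : ℝ → ℝ → ℝ) (m : ℕ) : ℝ≥0∞ :=
  ⨆ (J : Fin m → ℝ × ℝ) (x : Fin m → ℝ)
    (_ : NonoverlapIcc m J) (_ : ∀ j, x j ∈ Icc (0:ℝ) (2 * Real.pi)),
    ENNReal.ofReal (∑ j, |f (x j) (J j).2 - f (x j) (J j).1|)

/-- The shifted sequence `Λ_n = {λ_k}_{k=n}^∞`: its `i`-th member (`i ≥ 1`) is `λ_{n+i-1}`. -/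
def ShiftSeq (Λ : ℕ → ℝ) (n : ℕ) : ℕ → ℝ := fun k => Λ (k + n - 1)

/-- The sequence `λ_n = n / log n` (for `n ≥ 2`; the value at `n ≤ 1` is irrelevant). -/
def nlogSeq : ℕ → ℝ := fun n => if n ≤ 1 then 1 else (n : ℝ) / Real.log n

/-- Double Fourier coefficient
`f̂(m,n) = (1/(4π²)) ∫₀^{2π}∫₀^{2π} f(x,y) e^{-imx} e^{-iny} dx dy`. -/
def fCoef (f : ℝ → ℝ → ℝ) (m n : ℤ) : ℂ :=
  (4 * (Real.pi : ℂ) ^ 2)⁻¹ *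
    ∫ x in (0:ℝ)..(2 * Real.pi), ∫ y in (0:ℝ)..(2 * Real.pi),
      (f x y : ℂ) * Complex.exp (-(Complex.I * (m : ℂ) * (x : ℂ))) *
        Complex.exp (-(Complex.I * (n : ℂ) * (y : ℂ)))

/-- Rectangular partial sum `S_{M,N}[f,(x,y)]` of the double Fourier series. -/
def SRect (f : ℝ → ℝ → ℝ) (M N : ℕ) (x y : ℝ) : ℂ :=
  ∑ m ∈ Finset.Icc (-(M : ℤ)) (M : ℤ), ∑ n ∈ Finset.Icc (-(N : ℤ)) (N : ℤ),
    fCoef f m n * Complex.exp (Complex.I * (m : ℂ) * (x : ℂ)) *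
      Complex.exp (Complex.I * (n : ℂ) * (y : ℂ))

/-- One-sided punctured neighborhood filter: from the right if `s = true`,
from the left if `s = false`. -/
def sideF (x : ℝ) (s : Bool) : Filter ℝ :=
  if s then nhdsWithin x (Ioi x) else nhdsWithin x (Iio x)

/-- `HasQuadLim f x y s t L` means the open-quadrant limit of `f` at `(x,y)` from the
quadrant with horizontal direction `s` and vertical direction `t` exists and equals `L`
(e.g. `s = true, t = false` is `f(x+0, y-0)`). -/
def HasQuadLim (f : ℝ → ℝ → ℝ) (x y : ℝ) (s t : Bool) (L : ℝ) : Prop :=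
  Tendsto (fun p : ℝ × ℝ => f p.1 p.2) ((sideF x s) ×ˢ (sideF y t)) (nhds L)

/-- Cesàro numbers `A_k^α = (α+1)(α+2)⋯(α+k)/k!`. -/
def AA (α : ℝ) : ℕ → ℝ
  | 0 => 1
  | k + 1 => AA α k * (α + ((k : ℝ) + 1)) / ((k : ℝ) + 1)

/-- Cesàro `(C; α, β)` means of the double Fourier series of `f`. -/
def cesaro (f : ℝ → ℝ → ℝ) (α β : ℝ) (n m : ℕ) (x y : ℝ) : ℂ :=
  ((1 / (AA α n * AA β m) : ℝ) : ℂ) *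
    ∑ i ∈ Finset.range (n + 1), ∑ j ∈ Finset.range (m + 1),
      ((AA (α - 1) (n - i) * AA (β - 1) (m - j) : ℝ) : ℂ) * SRect f i j x y

end
namespace Stmt8
open Filter Set Finset

noncomputable def W (k : ℕ) : ℝ := (1 + Real.log (k + 2)) / (k + 1)

lemma log_add_le (x : ℝ) (hx : 0 < x) (y : ℝ) (hy : 0 ≤ y) :
    Real.log (x + y) ≤ Real.log x + y / x := by
  have h1 : Real.log ((x + y) / x) ≤ (x + y) / x - 1 :=
    Real.log_le_sub_one_of_pos (by positivity)
  rw [Real.log_div (by positivity) (ne_of_gt hx)] at h1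
  have : (x + y) / x - 1 = y / x := by field_simp; ring
  linarith [this ▸ h1]

lemma W_nonneg (k : ℕ) : 0 ≤ W k := by
  have : (0:ℝ) ≤ Real.log (k + 2) := Real.log_nonneg (by push_cast; linarith)
  unfold W; positivity

lemma W_step (k : ℕ) : W (k + 1) ≤ W k := by
  unfold W
  have h2 : (0:ℝ) < (k:ℝ) + 2 := by positivity
  have hlog : Real.log ((k:ℝ) + 3) ≤ Real.log ((k:ℝ) + 2) + 1 / ((k:ℝ) + 2) := by
    have h := log_add_le ((k:ℝ) + 2) h2 1 zero_le_one
    have e : (k:ℝ) + 2 + 1 = (k:ℝ) + 3 := by ring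
    rw [e] at h; exact h
  have hl2 : (0:ℝ) ≤ Real.log ((k:ℝ) + 2) := Real.log_nonneg (by linarith)
  rw [div_le_div_iff₀ (by positivity) (by positivity)]
  push_cast
  have e2 : ((k:ℝ) + 1 + 2) = (k:ℝ) + 3 := by ring
  rw [e2]
  have hfrac : ((k:ℝ) + 1) * (1 / ((k:ℝ) + 2)) ≤ 1 := by
    rw [mul_one_div]; exact (div_le_one h2).2 (by linarith)
  nlinarith [mul_le_mul_of_nonneg_right hlog (by positivity : (0:ℝ) ≤ (k:ℝ) + 1)]

lemma W_antitone : Antitone W := antitone_nat_of_succ_le W_step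

lemma W_step_nonneg (k : ℕ) : 0 ≤ W k - W (k + 1) := sub_nonneg.2 (W_step k)

lemma W_tendsto : Tendsto W atTop (nhds 0) := by
  have h1 : Tendsto (fun x : ℝ => Real.log x ^ 1 / (1 * x + (-1))) atTop (nhds 0) :=
    Real.tendsto_pow_log_div_mul_add_atTop 1 (-1) 1 one_ne_zero
  have h2 : Tendsto (fun k : ℕ => (k : ℝ) + 2) atTop atTop :=
    tendsto_atTop_add_const_right _ 2 tendsto_natCast_atTop_atTop
  have h3 : Tendsto (fun k : ℕ => Real.log ((k:ℝ) + 2) / ((k:ℝ) + 1)) atTop (nhds 0) :=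
    (h1.comp h2).congr fun k => by
      simp only [Function.comp_apply, pow_one, one_mul]
      have e : (k:ℝ) + 2 + (-1) = (k:ℝ) + 1 := by ring
      rw [e]
  have h4 : Tendsto (fun k : ℕ => 1 / ((k:ℝ) + 1)) atTop (nhds 0) :=
    tendsto_one_div_add_atTop_nhds_zero_nat
  have := h4.add h3
  rw [add_zero] at this
  exact this.congr (fun k => by unfold W; push_cast; ring)

lemma nlog_inv_le (k : ℕ) : (nlogSeq (k + 1))⁻¹ ≤ W k := by
  unfold nlogSeq W
  rcases Nat.eq_zero_or_pos k with rfl | hk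
  · norm_num
    linarith [Real.log_nonneg (by norm_num : (1:ℝ) ≤ 2)]
  · rw [if_neg (by omega)]
    rw [inv_div]
    push_cast
    gcongr
    have : Real.log ((k:ℕ) + 1 : ℝ) ≤ Real.log ((k:ℝ) + 2) :=
      Real.log_le_log (by positivity) (by push_cast; linarith)
    linarith

end Stmt8
namespace Stmt8

lemma W_step_le (n : ℕ) : W (n + 1) - W (n + 2) ≤ 4 * Real.log ((n:ℝ) + 2) / ((n:ℝ) + 2) ^ 2 := by
  have hl2' : (1:ℝ) / 2 ≤ Real.log ((n:ℝ) + 2) := by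
    have h := Real.log_two_gt_d9
    have : Real.log 2 ≤ Real.log ((n:ℝ) + 2) := Real.log_le_log (by norm_num) (by push_cast; linarith)
    linarith
  set L := Real.log ((n:ℝ) + 3) with hL
  have hl3 : L ≤ 2 * Real.log ((n:ℝ) + 2) := by
    rw [show (2:ℝ) * Real.log ((n:ℝ) + 2) = Real.log (((n:ℝ) + 2) ^ 2) by
      rw [Real.log_pow]; norm_num]
    exact Real.log_le_log (by positivity) (by nlinarith [sq_nonneg ((n:ℝ))])
  have hLnn : 0 ≤ L := Real.log_nonneg (by push_cast; linarith)
  have hW2 : (1 + L) / ((n:ℝ) + 3) ≤ W (n + 2) := by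
    unfold W; push_cast
    rw [show ((n:ℝ) + 2 + 2) = (n:ℝ) + 4 by ring, show ((n:ℝ) + 2 + 1) = (n:ℝ) + 3 by ring]
    gcongr
    exact Real.log_le_log (by positivity) (by linarith)
  have hW1 : W (n + 1) = (1 + L) / ((n:ℝ) + 2) := by
    unfold W; push_cast
    rw [show ((n:ℝ) + 1 + 2) = (n:ℝ) + 3 by ring, show ((n:ℝ) + 1 + 1) = (n:ℝ) + 2 by ring]
  have hid : (1 + L) / ((n:ℝ) + 2) - (1 + L) / ((n:ℝ) + 3)
      = (1 + L) / (((n:ℝ) + 2) * ((n:ℝ) + 3)) := by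
    field_simp
    ring
  have hbound : (1 + L) / (((n:ℝ) + 2) * ((n:ℝ) + 3)) ≤ 4 * Real.log ((n:ℝ) + 2) / ((n:ℝ) + 2) ^ 2 := by
    apply div_le_div₀ (by positivity) (by linarith) (by positivity)
    nlinarith [sq_nonneg ((n:ℝ) + 2)]
  linarith [hW2, hid ▸ hbound]

lemma abel (a V : ℕ → ℝ) (n : ℕ) :
    ∑ i ∈ Finset.range n, a i * V i
      = (∑ i ∈ Finset.range n, a i) * V n
        + ∑ k ∈ Finset.range n, (∑ i ∈ Finset.range (k + 1), a i) * (V k - V (k + 1)) := by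
  induction n with
  | zero => simp
  | succ n ih =>
    rw [Finset.sum_range_succ (f := fun i => a i * V i), ih,
      Finset.sum_range_succ (f := fun k => (∑ i ∈ Finset.range (k + 1), a i) * (V k - V (k + 1))),
      Finset.sum_range_succ (f := a)]
    ring

end Stmt8
namespace Stmt8
open Set

lemma modSharpV1_zero (f : ℝ → ℝ → ℝ) : modSharpV1 f 0 = 0 := by
  simp only [modSharpV1]
  refine le_antisymm ?_ zero_le
  simp

lemma modSharpV1_le_succ (f : ℝ → ℝ → ℝ) (m : ℕ) :
    modSharpV1 f m ≤ modSharpV1 f (m + 1) := by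
  rw [modSharpV1]
  refine iSup_le fun I => iSup_le fun y => iSup_le fun hI => iSup_le fun hy => ?_
  rcases Nat.eq_zero_or_pos m with rfl | hm
  · simp
  obtain ⟨j, rfl⟩ : ∃ j, m = j + 1 := ⟨m - 1, by omega⟩
  obtain ⟨h0, hαβ, h2π⟩ := hI.1 0
  set α := (I 0).1 with hα
  set β := (I 0).2 with hβ
  set μ := (α + β) / 2 with hμ
  have hαμ : α < μ := by rw [hμ]; linarith
  have hμβ : μ < β := by rw [hμ]; linarith
  set I' : Fin (j + 2) → ℝ × ℝ := fun i =>
    if h : (i : ℕ) < j + 1 then (if (i : ℕ) = 0 then (α, μ) else I ⟨i, h⟩) else (μ, β) with hI'def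
  set y' : Fin (j + 2) → ℝ := fun i =>
    if h : (i : ℕ) < j + 1 then y ⟨i, h⟩ else y 0 with hy'def
  have hIval : ∀ (i : Fin (j + 2)) (h : (i : ℕ) < j + 1), (i : ℕ) ≠ 0 → I' i = I ⟨i, h⟩ := by
    intro i h h0; simp only [hI'def, dif_pos h, if_neg h0]
  have hIfirst : ∀ (i : Fin (j + 2)), (i : ℕ) = 0 → I' i = (α, μ) := by
    intro i h0; simp only [hI'def, dif_pos (by omega : (i : ℕ) < j + 1), if_pos h0]
  have hIlast : ∀ (i : Fin (j + 2)), ¬ ((i : ℕ) < j + 1) → I' i = (μ, β) := by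
    intro i h; simp only [hI'def, dif_neg h]
  have hI'prop : NonoverlapIcc (j + 2) I' := by
    constructor
    · intro i
      by_cases h : (i : ℕ) < j + 1
      · by_cases hz : (i : ℕ) = 0
        · rw [hIfirst i hz]; exact ⟨h0, hαμ, by linarith⟩
        · rw [hIval i h hz]; exact hI.1 _
      · rw [hIlast i h]; exact ⟨by linarith, hμβ, h2π⟩
    · intro i k hik
      have hvne : (i : ℕ) ≠ (k : ℕ) := fun h => hik (Fin.ext h)
      by_cases hi : (i : ℕ) < j + 1 <;> by_cases hk : (k : ℕ) < j + 1
      · by_cases hi0 : (i : ℕ) = 0 <;> by_cases hk0 : (k : ℕ) = 0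
        · omega
        · -- i is (α, μ), k is original ≠ 0
          rw [hIfirst i hi0, hIval k hk hk0]
          rcases hI.2 0 ⟨k, hk⟩ (fun h => hk0 (by have := congrArg Fin.val h; simp only [Fin.val_zero, Fin.val_mk] at this; omega)) with h | h
          · left; exact le_trans (le_of_lt hμβ) h
          · right; exact h
        · rw [hIval i hi hi0, hIfirst k hk0]
          rcases hI.2 0 ⟨i, hi⟩ (fun h => hi0 (by have := congrArg Fin.val h; simp only [Fin.val_zero, Fin.val_mk] at this; omega)) with h | h
          · right; exact le_trans (le_of_lt hμβ) h
          · left; exact h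
        · rw [hIval i hi hi0, hIval k hk hk0]
          exact hI.2 _ _ (fun h => hvne (by simpa [Fin.ext_iff] using h))
      · -- k is last (μ, β)
        rw [hIlast k hk]
        by_cases hi0 : (i : ℕ) = 0
        · rw [hIfirst i hi0]; left; exact le_refl μ
        · rw [hIval i hi hi0]
          rcases hI.2 0 ⟨i, hi⟩ (fun h => hi0 (by have := congrArg Fin.val h; simp only [Fin.val_zero, Fin.val_mk] at this; omega)) with h | h
          · right; exact h
          · left; exact le_trans h (le_of_lt hαμ)
      · rw [hIlast i hi]
        by_cases hk0 : (k : ℕ) = 0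
        · rw [hIfirst k hk0]; right; exact le_refl μ
        · rw [hIval k hk hk0]
          rcases hI.2 0 ⟨k, hk⟩ (fun h => hk0 (by have := congrArg Fin.val h; simp only [Fin.val_zero, Fin.val_mk] at this; omega)) with h | h
          · left; exact h
          · right; exact le_trans h (le_of_lt hαμ)
      · exfalso; omega
  have hy'prop : ∀ i, y' i ∈ Icc (0:ℝ) (2 * Real.pi) := by
    intro i
    by_cases h : (i : ℕ) < j + 1
    · simp only [hy'def, dif_pos h]; exact hy _
    · simp only [hy'def, dif_neg h]; exact hy _
  have hsum : (∑ i, |f (I i).2 (y i) - f (I i).1 (y i)|)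
      ≤ ∑ i, |f (I' i).2 (y' i) - f (I' i).1 (y' i)| := by
    rw [Fin.sum_univ_castSucc (f := fun i => |f (I' i).2 (y' i) - f (I' i).1 (y' i)|)]
    have hlastval : I' (Fin.last (j + 1)) = (μ, β) := hIlast _ (by simp)
    have hylast : y' (Fin.last (j + 1)) = y 0 := by simp [hy'def]
    have hcast : ∀ i : Fin (j + 1),
        |f (I' i.castSucc).2 (y' i.castSucc) - f (I' i.castSucc).1 (y' i.castSucc)|
          = |f (if (i:ℕ) = 0 then (α, μ) else I i).2 (y i) - f (if (i:ℕ) = 0 then (α, μ) else I i).1 (y i)| := by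
      intro i
      have hlt : ((i.castSucc : Fin (j+2)) : ℕ) < j + 1 := by simp [i.isLt]
      simp only [hI'def, hy'def, dif_pos hlt]
      congr 2 <;> simp [Fin.castSucc]
    rw [Finset.sum_congr rfl (fun i _ => hcast i)]
    rw [Fin.sum_univ_succ (f := fun i : Fin (j+1) =>
      |f (if (i:ℕ) = 0 then (α, μ) else I i).2 (y i) - f (if (i:ℕ) = 0 then (α, μ) else I i).1 (y i)|)]
    rw [Fin.sum_univ_succ (f := fun i => |f (I i).2 (y i) - f (I i).1 (y i)|)]
    simp only [Fin.val_zero, if_pos rfl, if_true, hlastval, hylast]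
    have htri : |f (I 0).2 (y 0) - f (I 0).1 (y 0)| ≤
        |f μ (y 0) - f α (y 0)| + |f β (y 0) - f μ (y 0)| := by
      rw [← hα, ← hβ] at *
      calc |f β (y 0) - f α (y 0)| ≤ |f β (y 0) - f μ (y 0)| + |f μ (y 0) - f α (y 0)| :=
        abs_sub_le _ _ _
      _ = |f μ (y 0) - f α (y 0)| + |f β (y 0) - f μ (y 0)| := by ring
    have hrest : (∑ i : Fin j,
        |f (if ((i.succ : Fin (j+1)):ℕ) = 0 then (α, μ) else I i.succ).2 (y i.succ)
          - f (if ((i.succ : Fin (j+1)):ℕ) = 0 then (α, μ) else I i.succ).1 (y i.succ)|)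
        = ∑ i : Fin j, |f (I i.succ).2 (y i.succ) - f (I i.succ).1 (y i.succ)| := by
      refine Finset.sum_congr rfl fun i _ => ?_
      rw [if_neg (by simp)]
    rw [hrest]
    linarith
  calc ENNReal.ofReal (∑ i, |f (I i).2 (y i) - f (I i).1 (y i)|)
      ≤ ENNReal.ofReal (∑ i, |f (I' i).2 (y' i) - f (I' i).1 (y' i)|) := ENNReal.ofReal_le_ofReal hsum
    _ ≤ modSharpV1 f (j + 2) := by
        rw [modSharpV1]
        exact le_iSup_of_le I' <| le_iSup_of_le y' <| le_iSup_of_le hI'prop <|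
          le_iSup_of_le hy'prop le_rfl

lemma modSharpV1_mono (f : ℝ → ℝ → ℝ) : Monotone (modSharpV1 f) :=
  monotone_nat_of_le_succ (modSharpV1_le_succ f)

end Stmt8
namespace Stmt8
open Filter Set Finset

set_option maxHeartbeats 1000000 in
lemma main (f : ℝ → ℝ → ℝ)
    (h1 : ∑' n : ℕ, modSharpV1 f (n + 2) * ENNReal.ofReal (Real.log ((n : ℝ) + 2)) /
        ((n : ℝ≥0∞) + 2) ^ 2 ≠ ⊤) :
    LamSharpV1 nlogSeq f ≠ ⊤ := by
  set t : ℕ → ℝ≥0∞ := fun n => modSharpV1 f (n + 2) * ENNReal.ofReal (Real.log ((n : ℝ) + 2)) /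
      ((n : ℝ≥0∞) + 2) ^ 2 with ht
  have hPne : ∀ n : ℕ, ((n : ℝ≥0∞) + 2) ^ 2 ≠ ⊤ := by
    intro n
    exact ENNReal.pow_ne_top (by simp [ENNReal.add_ne_top])
  have hlogpos : ∀ n : ℕ, 0 < Real.log ((n : ℝ) + 2) :=
    fun n => Real.log_pos (by push_cast; linarith)
  have hfin2 : ∀ n : ℕ, modSharpV1 f (n + 2) ≠ ⊤ := by
    intro n htop
    apply ENNReal.ne_top_of_tsum_ne_top h1 n
    show modSharpV1 f (n + 2) * ENNReal.ofReal (Real.log ((n : ℝ) + 2)) / ((n : ℝ≥0∞) + 2) ^ 2 = ⊤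
    rw [htop, ENNReal.top_mul (by simp [ENNReal.ofReal_eq_zero]; linarith [hlogpos n]),
      ENNReal.top_div_of_ne_top (hPne n)]
  have hfin : ∀ m : ℕ, modSharpV1 f m ≠ ⊤ := fun m =>
    ne_top_of_le_ne_top (hfin2 m) (modSharpV1_mono f (by omega))
  set v : ℕ → ℝ := fun m => (modSharpV1 f m).toReal with hv
  have hvnn : ∀ m, 0 ≤ v m := fun m => ENNReal.toReal_nonneg
  have hv0 : v 0 = 0 := by rw [hv]; simp [modSharpV1_zero]
  have hvmono : Monotone v := fun a b h => ENNReal.toReal_mono (hfin b) (modSharpV1_mono f h)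
  have hterm : ∀ n : ℕ, (t n).toReal = v (n + 2) * Real.log ((n : ℝ) + 2) / ((n : ℝ) + 2) ^ 2 := by
    intro n
    show (modSharpV1 f (n + 2) * ENNReal.ofReal (Real.log ((n : ℝ) + 2)) /
        ((n : ℝ≥0∞) + 2) ^ 2).toReal = _
    rw [ENNReal.toReal_div, ENNReal.toReal_mul, ENNReal.toReal_ofReal (hlogpos n).le,
      ENNReal.toReal_pow, ENNReal.toReal_add (by simp) (by simp)]
    simp
    rfl
  set T : ℝ := v 1 * (W 0 - W 1) + 4 * (∑' n, t n).toReal with hTdef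
  -- the finite-sum bound
  have hT : ∀ F : Finset ℕ, (∑ m ∈ F, v (m + 1) * (W m - W (m + 1))) ≤ T := by
    intro F
    have hnn : ∀ m : ℕ, 0 ≤ v (m + 1) * (W m - W (m + 1)) :=
      fun m => mul_nonneg (hvnn _) (W_step_nonneg m)
    have h1' : (∑ m ∈ F, v (m + 1) * (W m - W (m + 1)))
        ≤ v 1 * (W 0 - W 1) + ∑ m ∈ F.erase 0, v (m + 1) * (W m - W (m + 1))  := by
      calc (∑ m ∈ F, v (m + 1) * (W m - W (m + 1)))
          ≤ ∑ m ∈ insert 0 (F.erase 0), v (m + 1) * (W m - W (m + 1)) :=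
            Finset.sum_le_sum_of_subset_of_nonneg
              (fun x hx => by by_cases h : x = 0 <;> simp [h, Finset.mem_erase, hx])
              (fun m _ _ => hnn m)
        _ = v 1 * (W 0 - W 1) + ∑ m ∈ F.erase 0, v (m + 1) * (W m - W (m + 1)) := by
            rw [Finset.sum_insert (Finset.notMem_erase 0 _)]
    have h2' : (∑ m ∈ F.erase 0, v (m + 1) * (W m - W (m + 1)))
        ≤ 4 * (∑' n, t n).toReal := by
      have hstep : ∀ m ∈ F.erase 0, v (m + 1) * (W m - W (m + 1)) ≤ 4 * (t (m - 1)).toReal := by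
        intro m hm
        have hm0 : m ≠ 0 := (Finset.mem_erase.1 hm).1
        obtain ⟨n, rfl⟩ : ∃ n, m = n + 1 := ⟨m - 1, by omega⟩
        have hb := W_step_le n
        have : v (n + 1 + 1) * (W (n + 1) - W (n + 1 + 1))
            ≤ v (n + 2) * (4 * Real.log ((n : ℝ) + 2) / ((n : ℝ) + 2) ^ 2) := by
          have : (n + 1 + 1) = n + 2 := by omega
          rw [this]
          exact mul_le_mul_of_nonneg_left (by convert hb using 3 <;> omega) (hvnn _)
        refine this.trans ?_
        rw [show n + 1 - 1 = n from rfl, hterm n]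
        exact le_of_eq (by ring)
      calc (∑ m ∈ F.erase 0, v (m + 1) * (W m - W (m + 1)))
          ≤ ∑ m ∈ F.erase 0, 4 * (t (m - 1)).toReal := Finset.sum_le_sum hstep
        _ = 4 * ∑ m ∈ F.erase 0, (t (m - 1)).toReal := by rw [Finset.mul_sum]
        _ = 4 * ∑ n ∈ (F.erase 0).image (· - 1), (t n).toReal := by
            rw [Finset.sum_image]
            intro x hx y hy hxy
            have hx0 : x ≠ 0 := (Finset.mem_erase.1 hx).1
            have hy0 : y ≠ 0 := (Finset.mem_erase.1 hy).1
            simp only at hxy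
            omega
        _ ≤ 4 * (∑' n, t n).toReal := by
            gcongr
            rw [← ENNReal.toReal_sum (fun a _ => ENNReal.ne_top_of_tsum_ne_top h1 a)]
            exact ENNReal.toReal_mono h1 (ENNReal.sum_le_tsum _)
    linarith
  have hTnn : 0 ≤ T := le_trans (by simp) (hT ∅)
  -- bound v n * W n ≤ T
  have hvW : ∀ n : ℕ, v n * W n ≤ T := by
    intro n
    have key : ∀ N : ℕ, v n * (W n - W (n + N)) ≤ T := by
      intro N
      have tel : ∑ m ∈ Finset.range N, (W (n + m) - W (n + m + 1)) = W n - W (n + N) := by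
        have h := Finset.sum_range_sub' (fun m => W (n + m)) N
        simpa [add_assoc] using h
      calc v n * (W n - W (n + N))
          = ∑ m ∈ Finset.range N, v n * (W (n + m) - W (n + m + 1)) := by
            rw [← Finset.mul_sum, tel]
        _ ≤ ∑ m ∈ Finset.range N, v (n + m + 1) * (W (n + m) - W (n + m + 1)) :=
            Finset.sum_le_sum fun m _ =>
              mul_le_mul_of_nonneg_right (hvmono (by omega)) (W_step_nonneg _)
        _ = ∑ j ∈ (Finset.range N).image (n + ·), v (j + 1) * (W j - W (j + 1)) := by
            rw [Finset.sum_image (fun x _ y _ h => by omega)]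
        _ ≤ T := hT _
    have hWlim : Tendsto (fun N : ℕ => W (n + N)) atTop (nhds 0) := by
      have h' : Tendsto (fun N : ℕ => n + N) atTop atTop :=
        tendsto_atTop_mono (fun N => Nat.le_add_left N n) tendsto_id
      exact W_tendsto.comp h'
    have hlim : Tendsto (fun N : ℕ => v n * (W n - W (n + N))) atTop (nhds (v n * W n)) := by
      have := (tendsto_const_nhds (x := W n) (f := atTop (α := ℕ))).sub hWlim
      rw [sub_zero] at this
      exact (tendsto_const_nhds (x := v n)).mul this
    exact le_of_tendsto hlim (Eventually.of_forall key)
  -- main estimate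
  have hmain : LamSharpV1 nlogSeq f ≤ ENNReal.ofReal (T + T) := by
    rw [LamSharpV1]
    refine iSup_le fun n => iSup_le fun I => iSup_le fun y => iSup_le fun hI => iSup_le fun hy => ?_
    set A : Fin n → ℝ := fun i => |f (I i).2 (y i) - f (I i).1 (y i)| with hA
    set a : ℕ → ℝ := fun k => if h : k < n then A ⟨k, h⟩ else 0 with ha
    have hann : ∀ k, 0 ≤ a k := by
      intro k; rw [ha]; dsimp only; split
      · exact abs_nonneg _
      · exact le_refl 0
    have hpre : ∀ m, m ≤ n → (∑ k ∈ Finset.range m, a k) ≤ v m := by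
      intro m hm
      have hsum_eq : (∑ k ∈ Finset.range m, a k) = ∑ i : Fin m, A (Fin.castLE hm i) := by
        rw [← Fin.sum_univ_eq_sum_range]
        refine Finset.sum_congr rfl fun i _ => ?_
        rw [ha]
        dsimp only
        rw [dif_pos (lt_of_lt_of_le i.isLt hm)]
        rfl
      have hconf : ENNReal.ofReal (∑ i : Fin m, A (Fin.castLE hm i)) ≤ modSharpV1 f m := by
        rw [modSharpV1]
        refine le_iSup_of_le (fun i => I (Fin.castLE hm i)) <|
          le_iSup_of_le (fun i => y (Fin.castLE hm i)) <|
          le_iSup_of_le ⟨fun i => hI.1 _, fun i k hik =>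
            hI.2 _ _ (fun h => hik (Fin.castLE_injective hm h))⟩ <|
          le_iSup_of_le (fun i => hy _) le_rfl
      rw [hsum_eq]
      have hnn : 0 ≤ ∑ i : Fin m, A (Fin.castLE hm i) :=
        Finset.sum_nonneg fun i _ => abs_nonneg _
      calc (∑ i : Fin m, A (Fin.castLE hm i))
          = (ENNReal.ofReal (∑ i : Fin m, A (Fin.castLE hm i))).toReal := by
            rw [ENNReal.toReal_ofReal hnn]
        _ ≤ v m := ENNReal.toReal_mono (hfin m) hconf
    refine ENNReal.ofReal_le_ofReal ?_
    have step1 : (∑ i : Fin n, |f (I i).2 (y i) - f (I i).1 (y i)| / nlogSeq ((i : ℕ) + 1))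
        = ∑ k ∈ Finset.range n, a k / nlogSeq (k + 1) := by
      rw [← Fin.sum_univ_eq_sum_range (fun k => a k / nlogSeq (k + 1))]
      refine Finset.sum_congr rfl fun i _ => ?_
      rw [ha]; dsimp only
      rw [dif_pos i.isLt]
    rw [step1]
    have step2 : (∑ k ∈ Finset.range n, a k / nlogSeq (k + 1))
        ≤ ∑ k ∈ Finset.range n, a k * W k := by
      refine Finset.sum_le_sum fun k _ => ?_
      rw [div_eq_mul_inv]
      exact mul_le_mul_of_nonneg_left (nlog_inv_le k) (hann k)
    refine step2.trans ?_
    rw [abel a W n]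
    have step3 : (∑ i ∈ Finset.range n, a i) * W n ≤ T := by
      calc (∑ i ∈ Finset.range n, a i) * W n ≤ v n * W n :=
            mul_le_mul_of_nonneg_right (hpre n le_rfl) (W_nonneg n)
        _ ≤ T := hvW n
    have step4 : (∑ k ∈ Finset.range n, (∑ i ∈ Finset.range (k + 1), a i) * (W k - W (k + 1))) ≤ T := by
      calc (∑ k ∈ Finset.range n, (∑ i ∈ Finset.range (k + 1), a i) * (W k - W (k + 1)))
          ≤ ∑ k ∈ Finset.range n, v (k + 1) * (W k - W (k + 1)) := by
            refine Finset.sum_le_sum fun k hk => ?_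
            exact mul_le_mul_of_nonneg_right
              (hpre (k + 1) (Finset.mem_range.1 hk)) (W_step_nonneg k)
        _ ≤ T := hT _
    linarith
  exact ne_top_of_le_ne_top ENNReal.ofReal_ne_top hmain

end Stmt8

/-- if `Σ v_s#(n,f)·log n / n² < ∞` for `s = 1,2`, then
`f ∈ {n/log n}#BV`. -/
theorem stmt8 (f : ℝ → ℝ → ℝ) (hper : Periodic2 f)
    (h1 : ∑' n : ℕ, modSharpV1 f (n + 2) * ENNReal.ofReal (Real.log ((n : ℝ) + 2)) /
        ((n : ℝ≥0∞) + 2) ^ 2 ≠ ⊤)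
    (h2 : ∑' n : ℕ, modSharpV2 f (n + 2) * ENNReal.ofReal (Real.log ((n : ℝ) + 2)) /
        ((n : ℝ≥0∞) + 2) ^ 2 ≠ ⊤) :
    LamSharpV1 nlogSeq f + LamSharpV2 nlogSeq f ≠ ⊤ := by
  have hb : LamSharpV2 nlogSeq f = LamSharpV1 nlogSeq (fun x y => f y x) := rfl
  have h2' : ∑' n : ℕ, modSharpV1 (fun x y => f y x) (n + 2) *
      ENNReal.ofReal (Real.log ((n : ℝ) + 2)) / ((n : ℝ≥0∞) + 2) ^ 2 ≠ ⊤ := h2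
  rw [hb]
  exact ENNReal.add_ne_top.2 ⟨Stmt8.main f h1, Stmt8.main (fun x y => f y x) h2'⟩
end

section
/- Let α, β > 0 with α + β < 1 and let f : ℝ² → ℝ be 2π-periodic in each variable with Σ_{j=1}^∞ v_s#(2^j,f) / 2^{j(1−(α+β))} < ∞ for s = 1,2. Then f ∈ C{n^{1−(α+β)}}#V, i.e. f is continuous in Λ#-variation for the sequence λ_n = n^{1−(α+β)}. -/
open scoped ENNReal BigOperators
open Filter Set

namespace Stmt10Aux

lemma modSharpV2_eq (f : ℝ → ℝ → ℝ) : modSharpV2 f = modSharpV1 (fun x y => f y x) := rfl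

lemma LamSharpV2_eq (Λ : ℕ → ℝ) (f : ℝ → ℝ → ℝ) :
    LamSharpV2 Λ f = LamSharpV1 Λ (fun x y => f y x) := rfl

lemma le_modSharpV1 (f : ℝ → ℝ → ℝ) {n : ℕ} (I : Fin n → ℝ × ℝ) (y : Fin n → ℝ)
    (hI : NonoverlapIcc n I) (hy : ∀ i, y i ∈ Set.Icc (0:ℝ) (2 * Real.pi)) :
    ENNReal.ofReal (∑ i, |f (I i).2 (y i) - f (I i).1 (y i)|) ≤ modSharpV1 f n := by
  rw [modSharpV1]
  exact le_iSup_of_le I (le_iSup_of_le y (le_iSup_of_le hI (le_iSup_of_le hy le_rfl)))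

lemma modSharpV1_le_succ (f : ℝ → ℝ → ℝ) (m : ℕ) :
    modSharpV1 f m ≤ modSharpV1 f (m + 1) := by
  rw [modSharpV1]
  refine iSup_le fun I => iSup_le fun y => iSup_le fun hI => iSup_le fun hy => ?_
  match m, I, y, hI, hy with
  | 0, I, y, hI, hy => simp
  | (k+1), I, y, hI, hy =>
    obtain ⟨hI1, hI2⟩ := hI
    set a := (I 0).1 with ha
    set b := (I 0).2 with hb
    set c := (a + b) / 2 with hc
    obtain ⟨h0a, h0ab, h0b⟩ := hI1 0
    have hac : a < c := by rw [hc]; simp only [← ha, ← hb] at *; linarith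
    have hcb : c < b := by rw [hc]; simp only [← ha, ← hb] at *; linarith
    set I1 : Fin (k+1) → ℝ × ℝ := Function.update I 0 (c, b) with hI1def
    set I' : Fin (k+2) → ℝ × ℝ := Fin.cons (a, c) I1 with hI'def
    set y' : Fin (k+2) → ℝ := Fin.cons (y 0) y with hy'def
    have hI10 : I1 0 = (c, b) := by simp [hI1def]
    have hI1ne : ∀ i : Fin (k+1), i ≠ 0 → I1 i = I i := by
      intro i h; simp [hI1def, Function.update_of_ne h]
    have key : ∀ j : Fin (k+1), j ≠ 0 → b ≤ (I j).1 ∨ (I j).2 ≤ a := by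
      intro j hj; exact hI2 0 j (Ne.symm hj)
    have hNO : NonoverlapIcc (k+2) I' := by
      constructor
      · intro i
        refine Fin.cases ?_ (fun j => ?_) i
        · simpa [hI'def] using ⟨h0a, hac, le_trans hcb.le h0b⟩
        · simp only [hI'def, Fin.cons_succ]
          by_cases h : j = 0
          · rw [h, hI10]
            exact ⟨le_trans h0a hac.le, hcb, h0b⟩
          · rw [hI1ne j h]; exact hI1 j
      · intro i j
        refine Fin.cases ?_ (fun i' => ?_) i <;> [skip; skip] <;>
          refine Fin.cases ?_ (fun j' => ?_) j
        · intro h; exact absurd rfl h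
        · intro _
          simp only [hI'def, Fin.cons_zero, Fin.cons_succ]
          by_cases h : j' = 0
          · rw [h, hI10]; left; exact le_rfl
          · rw [hI1ne j' h]
            rcases key j' h with h1 | h1
            · left; exact le_trans hcb.le h1
            · right; exact h1
        · intro _
          simp only [hI'def, Fin.cons_zero, Fin.cons_succ]
          by_cases h : i' = 0
          · rw [h, hI10]; right; exact le_rfl
          · rw [hI1ne i' h]
            rcases key i' h with h1 | h1
            · right; exact le_trans hcb.le h1
            · left; exact h1
        · intro hij'
          have hne : i' ≠ j' := fun h => hij' (by rw [h])
          simp only [hI'def, Fin.cons_succ]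
          by_cases h1 : i' = 0
          · have h2 : j' ≠ 0 := fun h => hne (h1.trans h.symm)
            rw [h1, hI10, hI1ne j' h2]
            rcases key j' h2 with h3 | h3
            · left; exact h3
            · right; exact le_trans h3 hac.le
          · by_cases h2 : j' = 0
            · rw [h2, hI10, hI1ne i' h1]
              rcases key i' h1 with h3 | h3
              · right; exact h3
              · left; exact le_trans h3 hac.le
            · rw [hI1ne i' h1, hI1ne j' h2]
              exact hI2 i' j' hne
    have hy'mem : ∀ i, y' i ∈ Set.Icc (0:ℝ) (2 * Real.pi) := by
      intro i
      refine Fin.cases ?_ (fun j => ?_) i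
      · simpa [hy'def] using hy 0
      · simpa [hy'def] using hy j
    refine le_trans (ENNReal.ofReal_le_ofReal ?_) (le_modSharpV1 f I' y' hNO hy'mem)
    have hrhs : ∑ i : Fin (k+2), |f (I' i).2 (y' i) - f (I' i).1 (y' i)| =
        |f c (y 0) - f a (y 0)| + ∑ i : Fin (k+1), |f (I1 i).2 (y i) - f (I1 i).1 (y i)| := by
      rw [Fin.sum_univ_succ]
      simp only [hI'def, hy'def, Fin.cons_zero, Fin.cons_succ]
    have e2 : ∑ i : Fin (k+1), |f (I1 i).2 (y i) - f (I1 i).1 (y i)| =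
        |f b (y 0) - f c (y 0)| +
          ∑ i ∈ Finset.univ.erase (0 : Fin (k+1)), |f (I i).2 (y i) - f (I i).1 (y i)| := by
      have h0 : |f (I1 0).2 (y 0) - f (I1 0).1 (y 0)| = |f b (y 0) - f c (y 0)| := by
        rw [hI10]
      have hrest : ∑ i ∈ Finset.univ.erase (0 : Fin (k+1)),
            |f (I1 i).2 (y i) - f (I1 i).1 (y i)| =
          ∑ i ∈ Finset.univ.erase (0 : Fin (k+1)),
            |f (I i).2 (y i) - f (I i).1 (y i)| :=
        Finset.sum_congr rfl fun i hi => by rw [hI1ne i (Finset.ne_of_mem_erase hi)]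
      conv_lhs => rw [← Finset.add_sum_erase _
        (fun i => |f (I1 i).2 (y i) - f (I1 i).1 (y i)|) (Finset.mem_univ 0)]
      rw [hrest, h0]
    have e3 : ∑ i : Fin (k+1), |f (I i).2 (y i) - f (I i).1 (y i)| =
        |f b (y 0) - f a (y 0)| +
          ∑ i ∈ Finset.univ.erase (0 : Fin (k+1)), |f (I i).2 (y i) - f (I i).1 (y i)| := by
      conv_lhs => rw [← Finset.add_sum_erase _
        (fun i => |f (I i).2 (y i) - f (I i).1 (y i)|) (Finset.mem_univ 0)]
    have tri : |f b (y 0) - f a (y 0)| ≤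
        |f c (y 0) - f a (y 0)| + |f b (y 0) - f c (y 0)| := by
      have h := abs_sub_le (f b (y 0)) (f c (y 0)) (f a (y 0))
      linarith
    rw [hrhs, e2, e3]
    linarith

lemma modSharpV1_mono (f : ℝ → ℝ → ℝ) : Monotone (modSharpV1 f) :=
  monotone_nat_of_le_succ (modSharpV1_le_succ f)

end Stmt10Aux
namespace Stmt10Aux

lemma sum_finset_le (f : ℝ → ℝ → ℝ) {N : ℕ} (I : Fin N → ℝ × ℝ) (y : Fin N → ℝ)
    (hI : NonoverlapIcc N I) (hy : ∀ i, y i ∈ Set.Icc (0:ℝ) (2 * Real.pi))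
    (S : Finset (Fin N)) {M : ℕ} (hM : S.card ≤ M) :
    ∑ i ∈ S, ENNReal.ofReal |f (I i).2 (y i) - f (I i).1 (y i)| ≤ modSharpV1 f M := by
  set e := S.orderIsoOfFin rfl with he
  set I' : Fin S.card → ℝ × ℝ := fun k => I (e k) with hI'
  set y' : Fin S.card → ℝ := fun k => y (e k) with hy'
  have hNO : NonoverlapIcc S.card I' := by
    constructor
    · intro k; exact hI.1 (e k)
    · intro k l hkl
      have : (e k : Fin N) ≠ (e l : Fin N) := by
        intro h
        exact hkl (e.injective (Subtype.ext h))
      exact hI.2 _ _ this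
  have hy'mem : ∀ k, y' k ∈ Set.Icc (0:ℝ) (2 * Real.pi) := fun k => hy (e k)
  have hsum : ∑ i ∈ S, |f (I i).2 (y i) - f (I i).1 (y i)| =
      ∑ k : Fin S.card, |f (I' k).2 (y' k) - f (I' k).1 (y' k)| := by
    rw [hI', hy']
    rw [← Finset.sum_attach S (fun i => |f (I i).2 (y i) - f (I i).1 (y i)|)]
    exact (Equiv.sum_comp e.toEquiv
      (fun x : {x // x ∈ S} => |f (I x).2 (y x) - f (I x).1 (y x)|)).symm
  calc ∑ i ∈ S, ENNReal.ofReal |f (I i).2 (y i) - f (I i).1 (y i)|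
      = ENNReal.ofReal (∑ i ∈ S, |f (I i).2 (y i) - f (I i).1 (y i)|) :=
        (ENNReal.ofReal_sum_of_nonneg (fun i _ => abs_nonneg _)).symm
    _ = ENNReal.ofReal (∑ k : Fin S.card, |f (I' k).2 (y' k) - f (I' k).1 (y' k)|) := by
        rw [hsum]
    _ ≤ modSharpV1 f S.card := le_modSharpV1 f I' y' hNO hy'mem
    _ ≤ modSharpV1 f M := modSharpV1_mono f hM

end Stmt10Aux
namespace Stmt10Aux

/-- The dyadic tail terms. -/
noncomputable def gfun (f : ℝ → ℝ → ℝ) (δ : ℝ) : ℕ → ℝ≥0∞ := fun j =>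
  modSharpV1 f (2 ^ (j + 1)) / ENNReal.ofReal ((2 : ℝ) ^ ((j : ℝ) * δ))

lemma lam_bound (f : ℝ → ℝ → ℝ) (δ : ℝ) (hδ : 0 < δ) (n : ℕ) (hn : 1 ≤ n) (J : ℕ) :
    LamSharpV1 (ShiftSeq (fun k => (k : ℝ) ^ δ) n) f ≤
      modSharpV1 f (2 ^ J) / ENNReal.ofReal ((n : ℝ) ^ δ) +
        ∑' j : ℕ, gfun f δ (J + j) := by
  rw [LamSharpV1]
  refine iSup_le fun N => iSup_le fun I => iSup_le fun y => iSup_le fun hI =>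
    iSup_le fun hy => ?_
  set d : Fin N → ℝ := fun i => |f (I i).2 (y i) - f (I i).1 (y i)| with hd
  set t : Fin N → ℝ≥0∞ := fun i =>
    ENNReal.ofReal (d i) / ENNReal.ofReal ((((i : ℕ) + n : ℕ) : ℝ) ^ δ) with ht
  have hcast : ∀ i : Fin N, ShiftSeq (fun k => (k : ℝ) ^ δ) n ((i : ℕ) + 1) =
      ((((i : ℕ) + n : ℕ) : ℝ) ^ δ) := by
    intro i
    rw [ShiftSeq]
    congr 2
    omega
  have hpos : ∀ i : Fin N, (0 : ℝ) < ((((i : ℕ) + n : ℕ) : ℝ)) ^ δ := by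
    intro i
    apply Real.rpow_pos_of_pos
    have : (1 : ℕ) ≤ (i : ℕ) + n := by omega
    exact_mod_cast Nat.lt_of_lt_of_le Nat.zero_lt_one this
  have step1 : ENNReal.ofReal
      (∑ i, d i / ShiftSeq (fun k => (k : ℝ) ^ δ) n ((i : ℕ) + 1)) = ∑ i, t i := by
    rw [ENNReal.ofReal_sum_of_nonneg]
    · exact Finset.sum_congr rfl fun i _ => by
        rw [hcast i, ENNReal.ofReal_div_of_pos (hpos i)]
    · intro i _
      rw [hcast i]
      exact div_nonneg (abs_nonneg _) (hpos i).le
  rw [step1]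
  classical
  set S0 : Finset (Fin N) := Finset.univ.filter (fun i => (i : ℕ) < 2 ^ J) with hS0
  set S1 : Finset (Fin N) := Finset.univ.filter (fun i => ¬ (i : ℕ) < 2 ^ J) with hS1
  have hsplit : ∑ i, t i = ∑ i ∈ S0, t i + ∑ i ∈ S1, t i :=
    (Finset.sum_filter_add_sum_filter_not _ _ _).symm
  rw [hsplit]
  refine add_le_add ?_ ?_
  · -- S0 part
    have hb : ∀ i ∈ S0, t i ≤ ENNReal.ofReal (d i) / ENNReal.ofReal ((n : ℝ) ^ δ) := by
      intro i _
      refine ENNReal.div_le_div le_rfl (ENNReal.ofReal_le_ofReal ?_)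
      refine Real.rpow_le_rpow (by positivity) ?_ hδ.le
      exact_mod_cast Nat.le_add_left n i
    calc ∑ i ∈ S0, t i ≤ ∑ i ∈ S0, ENNReal.ofReal (d i) / ENNReal.ofReal ((n : ℝ) ^ δ) :=
          Finset.sum_le_sum hb
      _ = (∑ i ∈ S0, ENNReal.ofReal (d i)) / ENNReal.ofReal ((n : ℝ) ^ δ) := by
          simp only [div_eq_mul_inv, Finset.sum_mul]
      _ ≤ modSharpV1 f (2 ^ J) / ENNReal.ofReal ((n : ℝ) ^ δ) := by
          refine ENNReal.div_le_div ?_ le_rfl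
          refine sum_finset_le f I y hI hy S0 ?_
          calc S0.card ≤ (Finset.range (2 ^ J)).card := by
                refine Finset.card_le_card_of_injOn (fun i => (i : ℕ)) ?_ ?_
                · intro i hi
                  rw [Finset.mem_coe, Finset.mem_range]
                  exact (Finset.mem_filter.1 hi).2
                · exact fun a _ b _ h => Fin.val_injective h
            _ = 2 ^ J := Finset.card_range _
  · -- S1 part
    have hmaps : ∀ i ∈ S1, Nat.log 2 (i : ℕ) ∈ Finset.Ico J N := by
      intro i hi
      have h2J : 2 ^ J ≤ (i : ℕ) := Nat.le_of_not_lt (Finset.mem_filter.1 hi).2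
      have hine : (i : ℕ) ≠ 0 := by
        have := pow_pos (by norm_num : (0:ℕ) < 2) J; omega
      rw [Finset.mem_Ico]
      constructor
      · exact (Nat.le_log_iff_pow_le one_lt_two hine).2 h2J
      · exact Nat.log_lt_of_lt_pow hine (lt_of_lt_of_le i.isLt (Nat.lt_two_pow_self (n := N)).le)
    rw [← Finset.sum_fiberwise_of_maps_to hmaps t]
    have hfib : ∀ j ∈ Finset.Ico J N,
        ∑ i ∈ S1.filter (fun i : Fin N => Nat.log 2 (i : ℕ) = j), t i ≤ gfun f δ j := by
      intro j _
      set B := S1.filter (fun i : Fin N => Nat.log 2 (i : ℕ) = j) with hB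
      have hmem : ∀ i ∈ B, 2 ^ j ≤ (i : ℕ) ∧ (i : ℕ) < 2 ^ (j + 1) := by
        intro i hi
        obtain ⟨hi1, hi2⟩ := Finset.mem_filter.1 hi
        have h2J : 2 ^ J ≤ (i : ℕ) := Nat.le_of_not_lt (Finset.mem_filter.1 hi1).2
        have hine : (i : ℕ) ≠ 0 := by
          have := pow_pos (by norm_num : (0:ℕ) < 2) J; omega
        constructor
        · rw [← hi2]; exact Nat.pow_log_le_self 2 hine
        · rw [← hi2]; exact Nat.lt_pow_succ_log_self one_lt_two _
      have hden : ((2 : ℝ) ^ ((j : ℝ) * δ)) = (((2 ^ j : ℕ) : ℝ)) ^ δ := by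
        rw [Real.rpow_mul (by norm_num : (0:ℝ) ≤ 2)]
        congr 1
        rw [Real.rpow_natCast]
        push_cast
        ring
      have hb : ∀ i ∈ B, t i ≤
          ENNReal.ofReal (d i) / ENNReal.ofReal ((2 : ℝ) ^ ((j : ℝ) * δ)) := by
        intro i hi
        refine ENNReal.div_le_div le_rfl (ENNReal.ofReal_le_ofReal ?_)
        rw [hden]
        refine Real.rpow_le_rpow (by positivity) ?_ hδ.le
        have := (hmem i hi).1
        have : (2 : ℕ) ^ j ≤ (i : ℕ) + n := le_trans this (Nat.le_add_right _ _)
        exact_mod_cast this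
      calc ∑ i ∈ B, t i
          ≤ ∑ i ∈ B, ENNReal.ofReal (d i) / ENNReal.ofReal ((2 : ℝ) ^ ((j : ℝ) * δ)) :=
            Finset.sum_le_sum hb
        _ = (∑ i ∈ B, ENNReal.ofReal (d i)) / ENNReal.ofReal ((2 : ℝ) ^ ((j : ℝ) * δ)) := by
            simp only [div_eq_mul_inv, Finset.sum_mul]
        _ ≤ modSharpV1 f (2 ^ (j + 1)) / ENNReal.ofReal ((2 : ℝ) ^ ((j : ℝ) * δ)) := by
            refine ENNReal.div_le_div ?_ le_rfl
            refine sum_finset_le f I y hI hy B ?_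
            calc B.card ≤ (Finset.range (2 ^ (j + 1))).card := by
                  refine Finset.card_le_card_of_injOn (fun i => (i : ℕ)) ?_ ?_
                  · intro i hi
                    rw [Finset.mem_coe, Finset.mem_range]
                    exact (hmem i hi).2
                  · exact fun a _ b _ h => Fin.val_injective h
              _ = 2 ^ (j + 1) := Finset.card_range _
        _ = gfun f δ j := rfl
    calc ∑ j ∈ Finset.Ico J N, ∑ i ∈ S1.filter (fun i : Fin N => Nat.log 2 (i : ℕ) = j), t i
        ≤ ∑ j ∈ Finset.Ico J N, gfun f δ j := Finset.sum_le_sum hfib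
      _ = ∑ k ∈ Finset.range (N - J), gfun f δ (J + k) :=
          Finset.sum_Ico_eq_sum_range _ _ _
      _ ≤ ∑' k : ℕ, gfun f δ (J + k) := ENNReal.sum_le_tsum _

end Stmt10Aux
namespace Stmt10Aux

lemma main1 (f : ℝ → ℝ → ℝ) (δ : ℝ) (hδ : 0 < δ)
    (h : ∑' j : ℕ, modSharpV1 f (2 ^ (j + 1)) / (2 : ℝ≥0∞) ^ (((j : ℝ) + 1) * δ) ≠ ⊤) :
    LamSharpV1 (fun k : ℕ => (k : ℝ) ^ δ) f ≠ ⊤ ∧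
      Tendsto (fun n : ℕ => LamSharpV1 (ShiftSeq (fun k : ℕ => (k : ℝ) ^ δ) n) f)
        atTop (nhds 0) := by
  have h2ne0 : (2 : ℝ≥0∞) ≠ 0 := by norm_num
  have h2net : (2 : ℝ≥0∞) ≠ ⊤ := by norm_num
  have hrne0 : ∀ x : ℝ, 0 ≤ x → (2 : ℝ≥0∞) ^ x ≠ 0 :=
    fun x _ => (ENNReal.rpow_pos (by norm_num) h2net).ne'
  have hrnet : ∀ x : ℝ, 0 ≤ x → (2 : ℝ≥0∞) ^ x ≠ ⊤ :=
    fun x hx => ENNReal.rpow_ne_top_of_nonneg hx h2net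
  -- finiteness of the dyadic moduli
  have hmod : ∀ j : ℕ, modSharpV1 f (2 ^ (j + 1)) ≠ ⊤ := by
    intro j
    have hterm := ENNReal.ne_top_of_tsum_ne_top h j
    have heq : modSharpV1 f (2 ^ (j + 1)) =
        (modSharpV1 f (2 ^ (j + 1)) / (2 : ℝ≥0∞) ^ (((j : ℝ) + 1) * δ)) *
          (2 : ℝ≥0∞) ^ (((j : ℝ) + 1) * δ) :=
      (ENNReal.div_mul_cancel (hrne0 _ (by positivity)) (hrnet _ (by positivity))).symm
    rw [heq]
    exact ENNReal.mul_ne_top hterm (hrnet _ (by positivity))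
  have hmodJ : ∀ J : ℕ, modSharpV1 f (2 ^ J) ≠ ⊤ := by
    intro J
    match J with
    | 0 =>
      intro htop
      have hle : modSharpV1 f (2 ^ 0) ≤ modSharpV1 f (2 ^ (0 + 1)) :=
        modSharpV1_mono f (by norm_num)
      rw [htop, top_le_iff] at hle
      exact hmod 0 hle
    | (j+1) => exact hmod j
  -- the ofReal denominators are ENNReal rpow's
  have hofR : ∀ j : ℕ, ENNReal.ofReal ((2 : ℝ) ^ ((j : ℝ) * δ)) =
      (2 : ℝ≥0∞) ^ ((j : ℝ) * δ) := by
    intro j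
    rw [← ENNReal.ofReal_rpow_of_pos (by norm_num : (0:ℝ) < 2), ENNReal.ofReal_ofNat]
  -- relate gfun to the hypothesis terms
  have hgf : ∀ j : ℕ, gfun f δ j =
      (2 : ℝ≥0∞) ^ δ *
        (modSharpV1 f (2 ^ (j + 1)) / (2 : ℝ≥0∞) ^ (((j : ℝ) + 1) * δ)) := by
    intro j
    rw [gfun, hofR j]
    rw [mul_div_assoc']
    rw [mul_comm ((2:ℝ≥0∞) ^ δ) _]
    rw [← ENNReal.mul_div_mul_right (modSharpV1 f (2 ^ (j + 1))) _
      (hrne0 δ hδ.le) (hrnet δ hδ.le)]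
    congr 1
    rw [← ENNReal.rpow_add _ _ h2ne0 h2net]
    congr 1
    ring
  have hgsum : ∑' j : ℕ, gfun f δ j ≠ ⊤ := by
    rw [tsum_congr hgf, ENNReal.tsum_mul_left]
    exact ENNReal.mul_ne_top (hrnet δ hδ.le) h
  -- tails tend to zero
  have htail : Tendsto (fun J : ℕ => ∑' k : ℕ, gfun f δ (J + k)) atTop (nhds 0) := by
    have := ENNReal.tendsto_sum_nat_add (gfun f δ) hgsum
    refine this.congr fun J => tsum_congr fun k => by rw [Nat.add_comm]
  -- the divisor part tends to zero
  have hdiv : ∀ C : ℝ≥0∞, C ≠ ⊤ →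
      Tendsto (fun n : ℕ => C / ENNReal.ofReal ((n : ℝ) ^ δ)) atTop (nhds 0) := by
    intro C hC
    have h1 : Tendsto (fun n : ℕ => ENNReal.ofReal ((n : ℝ) ^ δ)) atTop (nhds ⊤) :=
      ENNReal.tendsto_ofReal_atTop.comp
        ((tendsto_rpow_atTop hδ).comp tendsto_natCast_atTop_atTop)
    have h2 : Tendsto (fun n : ℕ => (ENNReal.ofReal ((n : ℝ) ^ δ))⁻¹) atTop (nhds 0) := by
      rw [← ENNReal.inv_top]
      exact ENNReal.tendsto_inv_iff.2 h1
    have h3 := ENNReal.Tendsto.const_mul h2 (Or.inr hC)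
    simpa [div_eq_mul_inv] using h3
  constructor
  · -- finiteness
    have hsh : LamSharpV1 (fun k : ℕ => (k : ℝ) ^ δ) f =
        LamSharpV1 (ShiftSeq (fun k : ℕ => (k : ℝ) ^ δ) 1) f := rfl
    rw [hsh]
    refine ne_top_of_le_ne_top ?_ (lam_bound f δ hδ 1 le_rfl 0)
    refine (ENNReal.add_ne_top).2 ⟨?_, ?_⟩
    · refine (ENNReal.div_lt_top (hmodJ 0) ?_).ne
      rw [Nat.cast_one, Real.one_rpow, ENNReal.ofReal_one]
      norm_num
    · refine ne_top_of_le_ne_top hgsum ?_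
      rw [show (fun k : ℕ => gfun f δ (0 + k)) = gfun f δ by funext k; rw [Nat.zero_add]]
  · -- tendsto
    rw [ENNReal.tendsto_nhds_zero]
    intro ε hε
    have hhalf : (0 : ℝ≥0∞) < ε / 2 := ENNReal.half_pos hε.ne'
    obtain ⟨J, hJ⟩ := (ENNReal.tendsto_nhds_zero.1 htail (ε / 2) hhalf).exists
    have hC := hdiv (modSharpV1 f (2 ^ J)) (hmodJ J)
    have hev1 := ENNReal.tendsto_nhds_zero.1 hC (ε / 2) hhalf
    filter_upwards [hev1, Filter.eventually_ge_atTop 1] with n hn1 hn2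
    calc LamSharpV1 (ShiftSeq (fun k : ℕ => (k : ℝ) ^ δ) n) f
        ≤ modSharpV1 f (2 ^ J) / ENNReal.ofReal ((n : ℝ) ^ δ) +
            ∑' k : ℕ, gfun f δ (J + k) := lam_bound f δ hδ n hn2 J
      _ ≤ ε / 2 + ε / 2 := add_le_add hn1 hJ
      _ = ε := ENNReal.add_halves ε

end Stmt10Aux

/-- if `α, β > 0`, `α + β < 1` and
`Σ_j v_s#(2^j, f)/2^{j(1-(α+β))} < ∞` for `s = 1,2`, then
`f ∈ C{n^{1-(α+β)}}#V`. -/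
theorem stmt10 (α β : ℝ) (hα : 0 < α) (hβ : 0 < β) (hab : α + β < 1)
    (f : ℝ → ℝ → ℝ) (hper : Periodic2 f)
    (h1 : ∑' j : ℕ, modSharpV1 f (2 ^ (j + 1)) /
        (2 : ℝ≥0∞) ^ (((j : ℝ) + 1) * (1 - (α + β))) ≠ ⊤)
    (h2 : ∑' j : ℕ, modSharpV2 f (2 ^ (j + 1)) /
        (2 : ℝ≥0∞) ^ (((j : ℝ) + 1) * (1 - (α + β))) ≠ ⊤) :
    (LamSharpV1 (fun n => (n : ℝ) ^ (1 - (α + β))) f +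
      LamSharpV2 (fun n => (n : ℝ) ^ (1 - (α + β))) f ≠ ⊤) ∧
    Tendsto (fun n : ℕ =>
      LamSharpV1 (ShiftSeq (fun k => (k : ℝ) ^ (1 - (α + β))) n) f) atTop (nhds 0) ∧
    Tendsto (fun n : ℕ =>
      LamSharpV2 (ShiftSeq (fun k => (k : ℝ) ^ (1 - (α + β))) n) f) atTop (nhds 0) := by
  have hδ : 0 < 1 - (α + β) := by linarith
  have m1 := Stmt10Aux.main1 f _ hδ h1
  simp only [Stmt10Aux.modSharpV2_eq] at h2
  have m2 := Stmt10Aux.main1 (fun x y => f y x) _ hδ h2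
  refine ⟨ENNReal.add_ne_top.2 ⟨m1.1, ?_⟩, m1.2, ?_⟩
  · rw [Stmt10Aux.LamSharpV2_eq]
    exact m2.1
  · simp only [Stmt10Aux.LamSharpV2_eq]
    exact m2.2
end
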